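/- Let A₁, A₂, A₃ be symmetric positive semidefinite matrices with A₁ + A₂ + A₃ = I. Then the average over all permutations σ of {1,2,3} of (A_{σ(1)} - A_{σ(3)}) A_{σ(2)} (A_{σ(1)} - A_{σ(3)}) is at most (4/27)·I in the Loewner order. -/

import Mathlib

open Matrix

lemma psd_smul {n : ℕ} {M : Matrix (Fin n) (Fin n) ℝ} (hM : M.PosSemidef) {c : ℝ} (hc : 0 ≤ c) :
    (c • M).PosSemidef := by
  constructor
  · unfold Matrix.IsHermitian
    rw [conjTranspose_smul, hM.1]; simp
  · intro x
    exact (hM.smul hc).2 x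

lemma perm3_sum {M : Type*} [AddCommMonoid M] (f : Fin 3 → Fin 3 → Fin 3 → M) :
    ∑ σ : Equiv.Perm (Fin 3), f (σ 0) (σ 1) (σ 2) =
      f 0 1 2 + f 0 2 1 + f 1 0 2 + f 1 2 0 + f 2 0 1 + f 2 1 0 := by
  rw [show (Finset.univ : Finset (Equiv.Perm (Fin 3))) =
      {1, Equiv.swap 1 2, Equiv.swap 0 1, Equiv.swap 0 1 * Equiv.swap 1 2,
        Equiv.swap 1 2 * Equiv.swap 0 1, Equiv.swap 0 2} from by decide]
  rw [Finset.sum_insert (by decide), Finset.sum_insert (by decide),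
    Finset.sum_insert (by decide), Finset.sum_insert (by decide),
    Finset.sum_insert (by decide), Finset.sum_singleton]
  simp [Equiv.swap_apply_def, Equiv.Perm.mul_apply]
  abel

theorem stmt12 {n : ℕ} (A : Fin 3 → Matrix (Fin n) (Fin n) ℝ)
    (hA : ∀ i, (A i).PosSemidef)
    (hsum : A 0 + A 1 + A 2 = (1 : Matrix (Fin n) (Fin n) ℝ)) :
    ((4 / 27 : ℝ) • (1 : Matrix (Fin n) (Fin n) ℝ) -
      (1 / 6 : ℝ) • ∑ σ : Equiv.Perm (Fin 3),
        (A (σ 0) - A (σ 2)) * A (σ 1) * (A (σ 0) - A (σ 2))).PosSemidef := by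
  set a := A 0 with ha
  set b := A 1 with hb
  set c := A 2 with hc
  have h2 : c = 1 - a - b := by rw [← hsum]; abel
  have hS : (∑ σ : Equiv.Perm (Fin 3),
        (A (σ 0) - A (σ 2)) * A (σ 1) * (A (σ 0) - A (σ 2)))
      = (8:ℕ) • (a^2 + b^2 + c^2) - (6:ℕ) • (a^3 + b^3 + c^3)
          - (2:ℕ) • (1 : Matrix (Fin n) (Fin n) ℝ) := by
    rw [perm3_sum (fun i j k => (A i - A k) * A j * (A i - A k))]
    rw [← ha, ← hb, ← hc, h2]
    noncomm_ring
  have hC : ((3:ℕ) • a - (2:ℕ) • 1) * a * ((3:ℕ) • a - (2:ℕ) • 1)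
      + ((3:ℕ) • b - (2:ℕ) • 1) * b * ((3:ℕ) • b - (2:ℕ) • 1)
      + ((3:ℕ) • c - (2:ℕ) • 1) * c * ((3:ℕ) • c - (2:ℕ) • 1)
      = (9:ℕ) • (a^3 + b^3 + c^3) - (12:ℕ) • (a^2 + b^2 + c^2)
          + (4:ℕ) • (1 : Matrix (Fin n) (Fin n) ℝ) := by
    rw [h2]; noncomm_ring
  have key : (4 / 27 : ℝ) • (1 : Matrix (Fin n) (Fin n) ℝ) -
      (1 / 6 : ℝ) • ∑ σ : Equiv.Perm (Fin 3),
        (A (σ 0) - A (σ 2)) * A (σ 1) * (A (σ 0) - A (σ 2))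
      = (1 / 27 : ℝ) • (1 : Matrix (Fin n) (Fin n) ℝ) +
        (1 / 9 : ℝ) • (((3:ℕ) • a - (2:ℕ) • 1) * a * ((3:ℕ) • a - (2:ℕ) • 1)
          + ((3:ℕ) • b - (2:ℕ) • 1) * b * ((3:ℕ) • b - (2:ℕ) • 1)
          + ((3:ℕ) • c - (2:ℕ) • 1) * c * ((3:ℕ) • c - (2:ℕ) • 1)) := by
    rw [hS, hC]
    module
  rw [key]
  have conj : ∀ i : Fin 3, (((3:ℕ) • A i - (2:ℕ) • 1) * A i * ((3:ℕ) • A i - (2:ℕ) • 1)).PosSemidef := by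
    intro i
    have herm : ((3:ℕ) • A i - (2:ℕ) • (1 : Matrix (Fin n) (Fin n) ℝ))ᴴ
        = (3:ℕ) • A i - (2:ℕ) • 1 := by
      rw [conjTranspose_sub, conjTranspose_nsmul, conjTranspose_nsmul, (hA i).1,
        conjTranspose_one]
    have := (hA i).conjTranspose_mul_mul_same ((3:ℕ) • A i - (2:ℕ) • 1)
    rwa [herm] at this
  refine Matrix.PosSemidef.add (psd_smul Matrix.PosSemidef.one (by norm_num))
    (psd_smul ?_ (by norm_num))
  exact ((conj 0).add (conj 1)).add (conj 2)
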